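/- arXiv:2410.20396 — 4 statements merged into one kernel-verified Lean document; each statement's English description precedes it below -/
import Mathlib

section
/- Let E and F be real Banach spaces, let Φ : E → F be a map, let L : E → F be a continuous linear isomorphism whose inverse has operator norm at most C > 0, and define N : E → F by N(x) = Φ(x) − Φ(0) − L(x). Assume there exist r > 0 and q > 0 such that ‖N(x) − N(y)‖ ≤ q·‖x + y‖·‖x − y‖ for all x, y in the open ball of radius r centered at 0 in E, and assume ‖Φ(0)‖ < min{r/(2C), 1/(4C²q)}. Then there exists a unique x in the closed ball of radius 2C·‖Φ(0)‖ centered at 0 in E such that Φ(x) = 0. -/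
/-- **Quantitative Implicit Function Theorem** (Lemma 4.5).
Let `E` and `F` be real Banach spaces, `Φ : E → F`, `L : E ≃L[ℝ] F` a continuous linear
isomorphism whose inverse has operator norm at most `C > 0`, and `N x = Φ x - Φ 0 - L x`.
If `‖N x - N y‖ ≤ q ‖x + y‖ ‖x - y‖` on the ball of radius `r` and
`‖Φ 0‖ < min (r / (2C)) (1 / (4 C² q))`, then there is a unique zero of `Φ` in the
closed ball of radius `2 C ‖Φ 0‖` about the origin. -/
theorem quantitative_IFT
    {E F : Type*} [NormedAddCommGroup E] [NormedSpace ℝ E] [CompleteSpace E]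
    [NormedAddCommGroup F] [NormedSpace ℝ F] [CompleteSpace F]
    (Φ : E → F) (L : E ≃L[ℝ] F) (C : ℝ) (hC : 0 < C)
    (hL : ‖(L.symm : F →L[ℝ] E)‖ ≤ C)
    (N : E → F) (hN : ∀ x, N x = Φ x - Φ 0 - L x)
    (r q : ℝ) (hr : 0 < r) (hq : 0 < q)
    (hLip : ∀ x ∈ Metric.ball (0 : E) r, ∀ y ∈ Metric.ball (0 : E) r,
      ‖N x - N y‖ ≤ q * ‖x + y‖ * ‖x - y‖)
    (hΦ0 : ‖Φ 0‖ < min (r / (2 * C)) (1 / (4 * C ^ 2 * q))) :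
    ∃! x : E, x ∈ Metric.closedBall (0 : E) (2 * C * ‖Φ 0‖) ∧ Φ x = 0 := by
  obtain ⟨h1, h2⟩ := lt_min_iff.mp hΦ0
  set ρ := 2 * C * ‖Φ 0‖ with hρdef
  have hρ0 : 0 ≤ ρ := by positivity
  have hρr : ρ < r := by
    have := (lt_div_iff₀ (by positivity : (0:ℝ) < 2 * C)).mp h1
    nlinarith
  have hK1 : 4 * C ^ 2 * q * ‖Φ 0‖ < 1 := by
    have := (lt_div_iff₀ (by positivity : (0:ℝ) < 4 * C ^ 2 * q)).mp h2
    nlinarith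
  have hK0 : 0 ≤ 4 * C ^ 2 * q * ‖Φ 0‖ := by positivity
  have hsub : ∀ x ∈ Metric.closedBall (0:E) ρ, x ∈ Metric.ball (0:E) r := by
    intro x hx
    rw [Metric.mem_closedBall, dist_zero_right] at hx
    rw [Metric.mem_ball, dist_zero_right]
    linarith
  have hN0 : N 0 = 0 := by simp [hN]
  have hnorm : ∀ v : F, ‖L.symm v‖ ≤ C * ‖v‖ := by
    intro v
    calc ‖L.symm v‖ = ‖(L.symm : F →L[ℝ] E) v‖ := rfl
      _ ≤ ‖(L.symm : F →L[ℝ] E)‖ * ‖v‖ := (L.symm : F →L[ℝ] E).le_opNorm v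
      _ ≤ C * ‖v‖ := by
          exact mul_le_mul_of_nonneg_right hL (norm_nonneg v)
  have hNb : ∀ x ∈ Metric.closedBall (0:E) ρ, ‖N x‖ ≤ q * ρ ^ 2 := by
    intro x hx
    have hx' : ‖x‖ ≤ ρ := by rwa [Metric.mem_closedBall, dist_zero_right] at hx
    have h0r : (0:E) ∈ Metric.ball (0:E) r := by
      rw [Metric.mem_ball, dist_self]; exact hr
    have := hLip x (hsub x hx) 0 h0r
    simp only [hN0, sub_zero, add_zero] at this
    have key : 0 ≤ q * (ρ - ‖x‖) * (ρ + ‖x‖) :=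
      mul_nonneg (mul_nonneg hq.le (by linarith)) (by nlinarith [norm_nonneg x])
    nlinarith [key, this]
  set G : E → E := fun x => -(L.symm (Φ 0 + N x)) with hGdef
  have hfix : ∀ x, (Φ x = 0 ↔ G x = x) := by
    intro x
    have hΦx : Φ x = Φ 0 + L x + N x := by rw [hN x]; abel
    constructor
    · intro h
      have h0 : Φ 0 + L x + N x = 0 := by rw [← hΦx]; exact h
      have hv : Φ 0 + N x = -(L x) := by
        rw [eq_neg_iff_add_eq_zero]
        calc Φ 0 + N x + L x = Φ 0 + L x + N x := by abel
          _ = 0 := h0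
      show -(L.symm (Φ 0 + N x)) = x
      rw [hv, ← map_neg L x, L.symm_apply_apply, neg_neg]
    · intro h
      have h1' : L.symm (Φ 0 + N x) = -x := neg_eq_iff_eq_neg.mp h
      have hv : Φ 0 + N x = L (-x) := by rw [← h1', L.apply_symm_apply]
      rw [hΦx]
      calc Φ 0 + L x + N x = (Φ 0 + N x) + L x := by abel
        _ = -(L x) + L x := by rw [hv, map_neg]
        _ = 0 := by abel
  have hmaps : ∀ x ∈ Metric.closedBall (0:E) ρ, G x ∈ Metric.closedBall (0:E) ρ := by
    intro x hx
    rw [Metric.mem_closedBall, dist_zero_right]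
    have h1' : ‖G x‖ ≤ C * ‖Φ 0 + N x‖ := by
      rw [hGdef]; rw [norm_neg]; exact hnorm _
    have h2' : ‖Φ 0 + N x‖ ≤ ‖Φ 0‖ + ‖N x‖ := norm_add_le _ _
    have h3' := hNb x hx
    have h4' : 0 ≤ C * ‖Φ 0‖ := by positivity
    have key : 0 ≤ (1 - 4 * C ^ 2 * q * ‖Φ 0‖) * (C * ‖Φ 0‖) :=
      mul_nonneg (by linarith) h4'
    rw [hρdef]
    rw [hρdef] at h3'
    nlinarith [key, h1', h2', h3', mul_le_mul_of_nonneg_left h3' hC.le]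
  have hcontr : ∀ x ∈ Metric.closedBall (0:E) ρ, ∀ y ∈ Metric.closedBall (0:E) ρ,
      ‖G x - G y‖ ≤ (4 * C ^ 2 * q * ‖Φ 0‖) * ‖x - y‖ := by
    intro x hx y hy
    have hx' : ‖x‖ ≤ ρ := by rwa [Metric.mem_closedBall, dist_zero_right] at hx
    have hy' : ‖y‖ ≤ ρ := by rwa [Metric.mem_closedBall, dist_zero_right] at hy
    have hGd : G x - G y = L.symm (N y - N x) := by
      simp only [hGdef, map_add, map_sub]; abel
    have hb : ‖N y - N x‖ ≤ q * ‖y + x‖ * ‖y - x‖ :=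
      hLip y (hsub y hy) x (hsub x hx)
    have hsum : ‖y + x‖ ≤ 2 * ρ := by
      calc ‖y + x‖ ≤ ‖y‖ + ‖x‖ := norm_add_le _ _
        _ ≤ 2 * ρ := by linarith
    have hrev : ‖y - x‖ = ‖x - y‖ := norm_sub_rev _ _
    calc ‖G x - G y‖ = ‖L.symm (N y - N x)‖ := by rw [hGd]
      _ ≤ C * ‖N y - N x‖ := hnorm _
      _ ≤ C * (q * ‖y + x‖ * ‖y - x‖) := mul_le_mul_of_nonneg_left hb hC.le
      _ ≤ C * (q * (2 * ρ) * ‖y - x‖) := by gcongr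
      _ = (4 * C ^ 2 * q * ‖Φ 0‖) * ‖x - y‖ := by rw [hρdef, hrev]; ring
  -- set up the fixed point argument on the closed ball
  set s : Set E := Metric.closedBall (0:E) ρ with hsdef
  haveI : CompleteSpace s := IsClosed.completeSpace_coe (hs := Metric.isClosed_closedBall)
  haveI : Nonempty s := ⟨⟨0, by simp [hsdef, hρ0]⟩⟩
  set K : NNReal := ⟨4 * C ^ 2 * q * ‖Φ 0‖, hK0⟩ with hKdef
  set f : s → s := fun x => ⟨G x, hmaps x x.2⟩ with hfdef
  have hlip : LipschitzWith K f := by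
    apply LipschitzWith.of_dist_le_mul
    intro x y
    simp only [Subtype.dist_eq, dist_eq_norm]
    exact hcontr x x.2 y y.2
  have hCW : ContractingWith K f := ⟨by exact_mod_cast hK1, hlip⟩
  set x₀ : s := hCW.fixedPoint f with hx₀def
  have hfx₀ : f x₀ = x₀ := hCW.fixedPoint_isFixedPt
  have hGx₀ : G (x₀ : E) = (x₀ : E) := congrArg Subtype.val hfx₀
  refine ⟨(x₀ : E), ⟨x₀.2, (hfix _).mpr hGx₀⟩, ?_⟩
  rintro y ⟨hy, hΦy⟩
  have hGy : G y = y := (hfix y).mp hΦy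
  have := hcontr y hy (x₀ : E) x₀.2
  rw [hGy, hGx₀] at this
  have hz : ‖y - (x₀ : E)‖ = 0 := by nlinarith [norm_nonneg (y - (x₀ : E))]
  have := norm_sub_eq_zero_iff.mp hz
  exact this
end

section
/- There exists a constant C > 0 such that for every real d ≥ 1 and every x ∈ ℝ³ with ‖x‖ ≤ d/2, the function φ_d is differentiable at x and the operator norm of its (Fréchet) derivative at x satisfies ‖Dφ_d(x)‖ ≤ C/d². -/
/-- The four characterising points `p₁, p₂, p₋₁, p₋₂` of the multi-Taub–NUT space `X_d`,
at the vertices of a square of side `√2·d` in Euclidean `ℝ³`. -/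
noncomputable def ghPoints (d : ℝ) : Fin 4 → EuclideanSpace ℝ (Fin 3) :=
  ![ !₂[Real.sqrt 2 / 2 * d, Real.sqrt 2 / 2 * d, 0],
     !₂[Real.sqrt 2 / 2 * d, -(Real.sqrt 2 / 2 * d), 0],
     !₂[-(Real.sqrt 2 / 2 * d), -(Real.sqrt 2 / 2 * d), 0],
     !₂[-(Real.sqrt 2 / 2 * d), Real.sqrt 2 / 2 * d, 0] ]

/-- The Gibbons–Hawking potential `φ_d(x) = 1 + Σᵢ 1/(2‖x − pᵢ‖)`. -/
noncomputable def ghPotential (d : ℝ) (x : EuclideanSpace ℝ (Fin 3)) : ℝ :=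
  1 + ∑ i : Fin 4, 1 / (2 * ‖x - ghPoints d i‖)

lemma ghPoints_norm (d : ℝ) (hd : 0 ≤ d) (i : Fin 4) : ‖ghPoints d i‖ = d := by
  have h2 : (Real.sqrt 2 / 2 * d)^2 = d^2 / 2 := by
    rw [mul_pow, div_pow, Real.sq_sqrt (by norm_num : (0:ℝ) ≤ 2)]; ring
  fin_cases i <;>
  · rw [EuclideanSpace.norm_eq]
    simp [ghPoints, Fin.sum_univ_three, neg_sq]
    rw [h2, show d^2/2 + d^2/2 = d^2 by ring, Real.sqrt_sq hd]

/-- Per-term Lipschitz-type estimate. -/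
lemma ghTerm_lip (d : ℝ) (hd : 0 < d) (p y z : EuclideanSpace ℝ (Fin 3))
    (hy : d/4 ≤ ‖y - p‖) (hz : d/4 ≤ ‖z - p‖) :
    |1 / (2 * ‖y - p‖) - 1 / (2 * ‖z - p‖)| ≤ 8 / d^2 * ‖y - z‖ := by
  set a := ‖y - p‖ with ha
  set b := ‖z - p‖ with hb
  have ha0 : 0 < a := lt_of_lt_of_le (by positivity) hy
  have hb0 : 0 < b := lt_of_lt_of_le (by positivity) hz
  have hdiff : 1 / (2*a) - 1 / (2*b) = (b - a) / (2*a*b) := by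
    field_simp
  have hba : |b - a| ≤ ‖y - z‖ := by
    rw [ha, hb]
    calc |‖z - p‖ - ‖y - p‖| ≤ ‖(z - p) - (y - p)‖ := abs_norm_sub_norm_le _ _
      _ = ‖y - z‖ := by rw [sub_sub_sub_cancel_right, norm_sub_rev]
  rw [hdiff, abs_div, abs_of_pos (by positivity : (0:ℝ) < 2*a*b)]
  calc |b - a| / (2*a*b) ≤ ‖y - z‖ / (2*(d/4)*(d/4)) := by
        gcongr
    _ = 8 / d^2 * ‖y - z‖ := by field_simp; ring

/-- First-order part of Lemma 2.2: for `‖x‖ ≤ d/2` the potential `φ_d` is differentiable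
at `x` and `‖Dφ_d(x)‖ ≤ C/d²`. -/
theorem ghPotential_deriv_estimate :
    ∃ C > 0, ∀ d : ℝ, 1 ≤ d → ∀ x : EuclideanSpace ℝ (Fin 3), ‖x‖ ≤ d / 2 →
      DifferentiableAt ℝ (ghPotential d) x ∧
      ‖fderiv ℝ (ghPotential d) x‖ ≤ C / d ^ 2 := by
  refine ⟨32, by norm_num, fun d hd x hx => ?_⟩
  have hd0 : (0:ℝ) < d := lt_of_lt_of_le one_pos hd
  -- lower bound for distances to the points
  have hlb : ∀ y : EuclideanSpace ℝ (Fin 3), ‖y‖ ≤ 3*d/4 → ∀ i : Fin 4,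
      d/4 ≤ ‖y - ghPoints d i‖ := by
    intro y hy i
    calc d/4 = d - 3*d/4 := by ring
      _ ≤ ‖ghPoints d i‖ - ‖y‖ := by rw [ghPoints_norm d hd0.le]; linarith
      _ ≤ ‖ghPoints d i - y‖ := norm_sub_norm_le _ _
      _ = ‖y - ghPoints d i‖ := norm_sub_rev _ _
  have hx34 : ‖x‖ ≤ 3*d/4 := by linarith
  have hxi := hlb x hx34
  have hfun : ghPotential d = fun y => 1 + ∑ i : Fin 4, 1 / (2 * ‖y - ghPoints d i‖) := rfl
  -- differentiability
  have hdiff : DifferentiableAt ℝ (ghPotential d) x := by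
    rw [hfun]
    refine (differentiableAt_const _).add (DifferentiableAt.fun_sum fun i _ => ?_)
    have hne : x - ghPoints d i ≠ 0 := by
      intro h
      have := hxi i
      rw [h, norm_zero] at this
      linarith
    have hnorm : DifferentiableAt ℝ (fun y : EuclideanSpace ℝ (Fin 3) => ‖y - ghPoints d i‖) x :=
      (differentiableAt_id.sub_const _).norm ℝ hne
    have hpos : (0:ℝ) < ‖x - ghPoints d i‖ := lt_of_lt_of_le (by positivity) (hxi i)
    have h2ne : 2 * ‖x - ghPoints d i‖ ≠ 0 := by positivity
    simpa only [one_div] using (hnorm.const_mul 2).fun_inv h2ne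
  refine ⟨hdiff, ?_⟩
  -- Lipschitz bound on a ball around x
  set s := Metric.ball x (d/4) with hs_def
  have hs : s ∈ nhds x := Metric.ball_mem_nhds x (by positivity)
  have hmem : ∀ y ∈ s, ‖y‖ ≤ 3*d/4 := by
    intro y hy
    have : dist y x < d/4 := Metric.mem_ball.mp hy
    have h1 : ‖y - x‖ < d/4 := by rwa [dist_eq_norm] at this
    calc ‖y‖ = ‖y - x + x‖ := by rw [sub_add_cancel]
      _ ≤ ‖y - x‖ + ‖x‖ := norm_add_le _ _
      _ ≤ 3*d/4 := by linarith
  have hlip : LipschitzOnWith (Real.toNNReal (32/d^2)) (ghPotential d) s := by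
    rw [lipschitzOnWith_iff_dist_le_mul]
    intro y hy z hz
    have hyi := hlb y (hmem y hy)
    have hzi := hlb z (hmem z hz)
    rw [Real.dist_eq, hfun]
    have hsum : (1 + ∑ i : Fin 4, 1 / (2 * ‖y - ghPoints d i‖)) -
        (1 + ∑ i : Fin 4, 1 / (2 * ‖z - ghPoints d i‖)) =
        ∑ i : Fin 4, (1 / (2 * ‖y - ghPoints d i‖) - 1 / (2 * ‖z - ghPoints d i‖)) := by
      rw [Finset.sum_sub_distrib]; ring
    rw [hsum]
    calc |∑ i : Fin 4, (1 / (2 * ‖y - ghPoints d i‖) - 1 / (2 * ‖z - ghPoints d i‖))|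
        ≤ ∑ i : Fin 4, |1 / (2 * ‖y - ghPoints d i‖) - 1 / (2 * ‖z - ghPoints d i‖)| :=
          Finset.abs_sum_le_sum_abs _ _
      _ ≤ ∑ _i : Fin 4, 8/d^2 * ‖y - z‖ :=
          Finset.sum_le_sum fun i _ => ghTerm_lip d hd0 _ y z (hyi i) (hzi i)
      _ = 32/d^2 * ‖y - z‖ := by
          rw [Finset.sum_const]; simp; ring
      _ = (Real.toNNReal (32/d^2) : ℝ) * dist y z := by
          rw [Real.coe_toNNReal _ (by positivity), dist_eq_norm]
  have hle := norm_fderiv_le_of_lipschitzOn ℝ hs hlip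
  calc ‖fderiv ℝ (ghPotential d) x‖ ≤ (Real.toNNReal (32/d^2) : ℝ) := hle
    _ = 32 / d^2 := Real.coe_toNNReal _ (by positivity)
end

section
/- Let i denote the imaginary quaternion unit and for a quaternion q let q̄ denote its conjugate. For every nonzero purely imaginary quaternion v (i.e. with zero real part): (a) there exists q ∈ ℍ with q̄·i·q = v; (b) any such q satisfies ‖q‖² = ‖v‖; and (c) if q and q′ both satisfy q̄·i·q = v = q̄′·i·q′, then there exists θ ∈ ℝ with q′ = (cos θ + (sin θ)·i)·q. In other words, the fibre of the map q ↦ q̄·i·q over any nonzero purely imaginary quaternion is a single nontrivial orbit of the circle action q ↦ e^{iθ}·q. -/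
/-- The imaginary quaternion unit `i`. -/
noncomputable def quatI : Quaternion ℝ := ⟨0, 1, 0, 0⟩

lemma quatI_re : quatI.re = 0 := rfl
lemma quatI_imI : quatI.imI = 1 := rfl
lemma quatI_imJ : quatI.imJ = 0 := rfl
lemma quatI_imK : quatI.imK = 0 := rfl


lemma quat_key (q : Quaternion ℝ) (hq : q.re = 0) :
    star q * quatI * q =
      (⟨0, q.imI ^ 2 - q.imJ ^ 2 - q.imK ^ 2, 2 * q.imI * q.imJ, 2 * q.imI * q.imK⟩ :
        Quaternion ℝ) := by
  apply Quaternion.ext <;>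
    simp [quatI_re, quatI_imI, quatI_imJ, quatI_imK, Quaternion.re_mul, Quaternion.imI_mul, Quaternion.imJ_mul,
      Quaternion.imK_mul, hq] <;> ring

lemma quatI_norm : ‖quatI‖ = 1 := by
  have h : Quaternion.normSq quatI = 1 := by
    rw [Quaternion.normSq_def']; simp [quatI]
  have h2 := Quaternion.normSq_eq_norm_mul_self quatI
  nlinarith [norm_nonneg quatI]

lemma norm_fibre (q v : Quaternion ℝ) (h : star q * quatI * q = v) : ‖q‖ ^ 2 = ‖v‖ := by
  rw [← h, norm_mul, norm_mul, Quaternion.norm_star, quatI_norm]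
  ring

/-- helper constructor for purely imaginary quaternions -/
noncomputable def mkIm (b c d : ℝ) : Quaternion ℝ := ⟨0, b, c, d⟩

@[simp] lemma mkIm_re (b c d : ℝ) : (mkIm b c d).re = 0 := rfl
@[simp] lemma mkIm_imI (b c d : ℝ) : (mkIm b c d).imI = b := rfl
@[simp] lemma mkIm_imJ (b c d : ℝ) : (mkIm b c d).imJ = c := rfl
@[simp] lemma mkIm_imK (b c d : ℝ) : (mkIm b c d).imK = d := rfl

lemma quat_exists (v : Quaternion ℝ) (hv : v ≠ 0) (hre : v.re = 0) :
    ∃ q : Quaternion ℝ, star q * quatI * q = v := by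
  set x := v.imI with hx
  set y := v.imJ with hy
  set z := v.imK with hz
  have hsum : 0 < x ^ 2 + y ^ 2 + z ^ 2 := by
    rcases lt_or_eq_of_le (by positivity : (0:ℝ) ≤ x ^ 2 + y ^ 2 + z ^ 2) with h | h
    · exact h
    · exfalso; apply hv
      have hx0 : x = 0 := by nlinarith
      have hy0 : y = 0 := by nlinarith
      have hz0 : z = 0 := by nlinarith
      refine Quaternion.ext _ _ hre ?_ ?_ ?_ <;>
        simp [← hx, ← hy, ← hz, hx0, hy0, hz0, Quaternion.re_zero,
          Quaternion.imI_zero, Quaternion.imJ_zero, Quaternion.imK_zero]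
  set r := Real.sqrt (x ^ 2 + y ^ 2 + z ^ 2) with hr
  have hr2 : r ^ 2 = x ^ 2 + y ^ 2 + z ^ 2 := Real.sq_sqrt hsum.le
  have hrpos : 0 < r := Real.sqrt_pos.mpr hsum
  by_cases hcase : 0 < r + x
  · set s := Real.sqrt (2 * (r + x)) with hs
    have hs2 : s ^ 2 = 2 * (r + x) := Real.sq_sqrt (by linarith)
    have hspos : 0 < s := Real.sqrt_pos.mpr (by linarith)
    refine ⟨mkIm ((r + x) / s) (y / s) (z / s), ?_⟩
    rw [quat_key _ (mkIm_re _ _ _)]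
    refine Quaternion.ext _ _ hre.symm ?_ ?_ ?_ <;> simp only [mkIm_imI, mkIm_imJ, mkIm_imK]
    · show ((r + x) / s) ^ 2 - (y / s) ^ 2 - (z / s) ^ 2 = x
      field_simp
      nlinarith [hr2, hs2]
    · show 2 * ((r + x) / s) * (y / s) = y
      field_simp
      linear_combination (-y) * hs2
    · show 2 * ((r + x) / s) * (z / s) = z
      field_simp
      linear_combination (-z) * hs2
  · have hxr : x = -r := by nlinarith [hr2]
    have hy0 : y = 0 := by nlinarith [hr2]
    have hz0 : z = 0 := by nlinarith [hr2]
    refine ⟨mkIm 0 (Real.sqrt r) 0, ?_⟩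
    rw [quat_key _ (mkIm_re _ _ _)]
    refine Quaternion.ext _ _ hre.symm ?_ ?_ ?_ <;> simp only [mkIm_imI, mkIm_imJ, mkIm_imK]
    · show (0:ℝ) ^ 2 - Real.sqrt r ^ 2 - 0 ^ 2 = x
      rw [Real.sq_sqrt hrpos.le]; linarith
    · show 2 * (0:ℝ) * Real.sqrt r = y
      rw [hy0]; ring
    · show 2 * (0:ℝ) * (0:ℝ) = z
      rw [hz0]; ring

lemma quat_circ (v q q' : Quaternion ℝ) (hv : v ≠ 0)
    (hq : star q * quatI * q = v) (hq' : star q' * quatI * q' = v) :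
    ∃ θ : ℝ, q' = ((Real.cos θ : ℝ) + (Real.sin θ : ℝ) * quatI) * q := by
  have hq0 : q ≠ 0 := by
    rintro rfl
    simp at hq
    exact hv hq.symm
  obtain ⟨u, hq'u⟩ : ∃ u : Quaternion ℝ, q' = u * q :=
    ⟨q' * q⁻¹, by rw [mul_assoc, inv_mul_cancel₀ hq0, mul_one]⟩
  -- norm of u is 1
  have hnq : ‖q‖ ^ 2 = ‖v‖ := norm_fibre q v hq
  have hnq' : ‖q'‖ ^ 2 = ‖v‖ := norm_fibre q' v hq'
  have hnq0 : ‖q‖ ≠ 0 := norm_ne_zero_iff.mpr hq0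
  have hnu : ‖u‖ = 1 := by
    have hqq : ‖q'‖ = ‖q‖ := by
      nlinarith [norm_nonneg q, norm_nonneg q']
    have : ‖u‖ * ‖q‖ = ‖q‖ := by rw [← norm_mul, ← hq'u, hqq]
    field_simp at this
    tauto
  have hnsq : Quaternion.normSq u = 1 := by
    rw [Quaternion.normSq_eq_norm_mul_self, hnu]; ring
  -- star u * quatI * u = quatI
  have hkey : star (u * q) * quatI * (u * q) = star q * (star u * quatI * u) * q := by
    rw [star_mul]; noncomm_ring
  have h1 : star q * (star u * quatI * u) * q = star q * quatI * q := by
    rw [← hkey, ← hq'u, hq', hq]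
  have h2 : star u * quatI * u = quatI :=
    mul_left_cancel₀ (star_ne_zero.mpr hq0) (mul_right_cancel₀ hq0 h1)
  -- u commutes with quatI
  have h3 : quatI * u = u * quatI := by
    have h4 : (u * star u) * (quatI * u) = u * quatI := by
      calc (u * star u) * (quatI * u) = u * (star u * quatI * u) := by noncomm_ring
        _ = u * quatI := by rw [h2]
    rw [Quaternion.self_mul_star, hnsq] at h4
    simpa using h4
  have hJ : u.imJ = 0 := by
    have := congrArg QuaternionAlgebra.imK h3
    simp [quatI_re, quatI_imI, quatI_imJ, quatI_imK, Quaternion.imK_mul] at this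
    linarith
  have hK : u.imK = 0 := by
    have := congrArg QuaternionAlgebra.imJ h3
    simp [quatI_re, quatI_imI, quatI_imJ, quatI_imK, Quaternion.imJ_mul] at this
    linarith
  set a := u.re with ha
  set b := u.imI with hb
  have hab : a ^ 2 + b ^ 2 = 1 := by
    have := Quaternion.normSq_def' u
    rw [hnsq, hJ, hK] at this
    nlinarith [this]
  set z : ℂ := ⟨a, b⟩ with hz
  have habs : ‖z‖ = 1 := by
    have h5 : Complex.normSq z = 1 := by
      rw [Complex.normSq_mk]; nlinarith
    have h6 := Complex.sq_norm z
    nlinarith [norm_nonneg z]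
  have hz0 : z ≠ 0 := by
    intro h; rw [h] at habs; simp at habs
  refine ⟨Complex.arg z, ?_⟩
  have hcos : Real.cos (Complex.arg z) = a := by
    rw [Complex.cos_arg hz0, habs]; simp [hz]
  have hsin : Real.sin (Complex.arg z) = b := by
    rw [Complex.sin_arg, habs]; simp [hz]
  rw [hq'u, hcos, hsin]
  congr 1
  refine Quaternion.ext _ _ ?_ ?_ ?_ ?_ <;>
    simp [quatI_re, quatI_imI, quatI_imJ, quatI_imK, Quaternion.re_mul, Quaternion.imI_mul, Quaternion.imJ_mul,
      Quaternion.imK_mul, hJ, hK, ← ha, ← hb]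

/-- Section 2.3: the fibre of the hyperkähler moment map `q ↦ q̄·i·q` over any nonzero
purely imaginary quaternion `v` is a single nontrivial orbit of the circle action
`q ↦ e^{iθ}·q`: (a) there is a solution `q`; (b) any solution satisfies `‖q‖² = ‖v‖`;
(c) any two solutions differ by multiplication by `cos θ + (sin θ)·i`. -/
theorem quaternion_moment_fibre (v : Quaternion ℝ) (hv : v ≠ 0) (hre : v.re = 0) :
    (∃ q : Quaternion ℝ, star q * quatI * q = v) ∧
    (∀ q : Quaternion ℝ, star q * quatI * q = v → ‖q‖ ^ 2 = ‖v‖) ∧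
    (∀ q q' : Quaternion ℝ, star q * quatI * q = v → star q' * quatI * q' = v →
      ∃ θ : ℝ, q' = ((Real.cos θ : ℝ) + (Real.sin θ : ℝ) * quatI) * q) := by
  exact ⟨quat_exists v hv hre, fun q hq => norm_fibre q v hq,
    fun q q' hq hq' => quat_circ v q q' hv hq hq'⟩
end

section
/- Let u : ℝ² → ℝ be twice continuously differentiable, bounded, 2π-periodic in its second variable (u(x, t + 2π) = u(x, t) for all x, t), and harmonic, i.e. ∂²u/∂x² + ∂²u/∂t² = 0 at every point. Then u is constant. -/
open Real

private lemma clm_prod_decomp (L : ℝ × ℝ →L[ℝ] ℝ) (w : ℝ × ℝ) :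
    L w = w.1 * L (1, 0) + w.2 * L (0, 1) := by
  have hw : w = w.1 • ((1:ℝ), (0:ℝ)) + w.2 • ((0:ℝ), (1:ℝ)) := by
    simp [Prod.ext_iff]
  have h2 : L w = L (w.1 • ((1:ℝ), (0:ℝ))) + L (w.2 • ((0:ℝ), (1:ℝ))) := by
    rw [← map_add]; exact congrArg L hw
  rw [h2, map_smul, map_smul, smul_eq_mul, smul_eq_mul]

private lemma abs_sub_le_of_mem_uIoc {a b s : ℝ} (h : s ∈ Set.uIoc a b) :
    |s - a| ≤ |b - a| := by
  have h1 := le_abs_self (b - a)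
  have h2 := neg_abs_le (b - a)
  rcases Set.mem_uIoc.mp h with ⟨ha, hb⟩ | ⟨ha, hb⟩ <;>
    (rw [abs_sub_le_iff]; constructor <;> linarith)

/-- Liouville-type theorem on the flat cylinder `ℝ × S¹` (Proposition 4.3): a bounded,
`C²`, `2π`-periodic-in-`t`, harmonic function `u(x,t)` on `ℝ²` is constant. -/
theorem bounded_harmonic_on_cylinder_constant (u : ℝ → ℝ → ℝ)
    (hreg : ContDiff ℝ 2 (Function.uncurry u))
    (hbdd : ∃ M : ℝ, ∀ x t : ℝ, |u x t| ≤ M)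
    (hper : ∀ x t : ℝ, u x (t + 2 * π) = u x t)
    (hharm : ∀ x t : ℝ,
      deriv (fun s => deriv (fun s' => u s' t) s) x +
        deriv (fun s => deriv (fun s' => u x s') s) t = 0) :
    ∃ c : ℝ, ∀ x t : ℝ, u x t = c := by
  obtain ⟨M, hM⟩ := hbdd
  set U : ℝ × ℝ → ℝ := Function.uncurry u with hUdef
  have hUd : Differentiable ℝ U := hreg.differentiable (by norm_num)
  have hfd1 : ContDiff ℝ 1 (fderiv ℝ U) := hreg.fderiv_right (by norm_num)
  set D1 : ℝ × ℝ → ℝ := fun p => fderiv ℝ U p (1, 0) with hD1def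
  set D2 : ℝ × ℝ → ℝ := fun p => fderiv ℝ U p (0, 1) with hD2def
  have hD1c : ContDiff ℝ 1 D1 :=
    (ContinuousLinearMap.apply ℝ ℝ ((1:ℝ), (0:ℝ))).contDiff.comp hfd1
  have hD2c : ContDiff ℝ 1 D2 :=
    (ContinuousLinearMap.apply ℝ ℝ ((0:ℝ), (1:ℝ))).contDiff.comp hfd1
  have hD1d : Differentiable ℝ D1 := hD1c.differentiable one_ne_zero
  have hD2d : Differentiable ℝ D2 := hD2c.differentiable one_ne_zero
  have hD1cont : Continuous D1 := hD1c.continuous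
  have hD2cont : Continuous D2 := hD2c.continuous
  -- derivatives along horizontal and vertical lines
  have hline1 : ∀ (g : ℝ × ℝ → ℝ), Differentiable ℝ g → ∀ (x t : ℝ),
      HasDerivAt (fun s => g (s, t)) (fderiv ℝ g (x, t) (1, 0)) x := by
    intro g hg x t
    have h1 : HasDerivAt (fun s : ℝ => (s, t)) ((1:ℝ), (0:ℝ)) x :=
      HasDerivAt.prodMk (hasDerivAt_id x) (hasDerivAt_const x t)
    exact HasFDerivAt.comp_hasDerivAt x (hg (x, t)).hasFDerivAt h1
  have hline2 : ∀ (g : ℝ × ℝ → ℝ), Differentiable ℝ g → ∀ (x t : ℝ),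
      HasDerivAt (fun s => g (x, s)) (fderiv ℝ g (x, t) (0, 1)) t := by
    intro g hg x t
    have h1 : HasDerivAt (fun s : ℝ => (x, s)) ((0:ℝ), (1:ℝ)) t :=
      HasDerivAt.prodMk (hasDerivAt_const t x) (hasDerivAt_id t)
    exact HasFDerivAt.comp_hasDerivAt t (hg (x, t)).hasFDerivAt h1
  -- translation of harmonicity
  have hH1 : ∀ x t : ℝ, fderiv ℝ D1 (x, t) (1, 0) + fderiv ℝ D2 (x, t) (0, 1) = 0 := by
    intro x t
    have e1 : (fun s => deriv (fun s' => u s' t) s) = fun s => D1 (s, t) :=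
      funext fun s => (hline1 U hUd s t).deriv
    have e2 : (fun s => deriv (fun s' => u x s') s) = fun s => D2 (x, s) :=
      funext fun s => (hline2 U hUd x s).deriv
    have h := hharm x t
    rw [e1, e2, (hline1 D1 hD1d x t).deriv, (hline2 D2 hD2d x t).deriv] at h
    exact h
  -- the harmonic conjugate
  set v : ℝ → ℝ → ℝ := fun x t => (∫ s in (0:ℝ)..t, D1 (x, s)) - ∫ s in (0:ℝ)..x, D2 (s, 0)
    with hvdef
  have hcontD1x : ∀ x : ℝ, Continuous fun s => D1 (x, s) := by
    intro x; exact hD1cont.comp (by fun_prop)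
  have hcontD2b : Continuous fun s => D2 (s, 0) := hD2cont.comp (by fun_prop)
  -- t-derivative of v
  have ht : ∀ x t : ℝ, HasDerivAt (fun t' => v x t') (D1 (x, t)) t := by
    intro x t
    have h := intervalIntegral.integral_hasDerivAt_right
      ((hcontD1x x).intervalIntegrable 0 t)
      ((hcontD1x x).stronglyMeasurableAtFilter _ _)
      (hcontD1x x).continuousAt
    exact h.sub_const _
  -- x-derivative of v
  have hx : ∀ x t : ℝ, HasDerivAt (fun x' => v x' t) (-D2 (x, t)) x := by
    intro x₀ t
    have hcont11 : Continuous fun p : ℝ × ℝ => fderiv ℝ D1 p ((1:ℝ), (0:ℝ)) :=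
      (ContinuousLinearMap.apply ℝ ℝ ((1:ℝ), (0:ℝ))).continuous.comp
        (hD1c.continuous_fderiv one_ne_zero)
    have hK : IsCompact (Set.Icc (x₀ - 1) (x₀ + 1) ×ˢ Set.uIcc (0:ℝ) t) :=
      isCompact_Icc.prod isCompact_uIcc
    obtain ⟨C, hC⟩ := hK.exists_bound_of_continuousOn hcont11.continuousOn
    have h := intervalIntegral.hasDerivAt_integral_of_dominated_loc_of_deriv_le
      (F := fun x s => D1 (x, s)) (F' := fun x s => fderiv ℝ D1 (x, s) (1, 0))
      (bound := fun _ => C) (a := 0) (b := t) (x₀ := x₀) (μ := MeasureTheory.volume) (Metric.ball_mem_nhds x₀ one_pos)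
      (Filter.Eventually.of_forall fun x =>
        ((hcontD1x x).aestronglyMeasurable).restrict)
      ((hcontD1x x₀).intervalIntegrable 0 t)
      (((hcont11.comp (by fun_prop : Continuous fun s : ℝ => (x₀, s))).aestronglyMeasurable).restrict)
      (Filter.Eventually.of_forall fun s hs x hxb => by
        refine hC (x, s) ⟨?_, Set.uIoc_subset_uIcc hs⟩
        · have := Metric.mem_ball.mp hxb
          rw [Real.dist_eq] at this
          constructor <;> [linarith [abs_le.mp this.le]; linarith [(abs_le.mp this.le).2]])
      (intervalIntegrable_const)
      (Filter.Eventually.of_forall fun s _ x _ => hline1 D1 hD1d x s)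
    have hint : (∫ s in (0:ℝ)..t, fderiv ℝ D1 (x₀, s) (1, 0)) = -(D2 (x₀, t) - D2 (x₀, 0)) := by
      have e : (fun s => fderiv ℝ D1 (x₀, s) (1, 0)) =
          fun s => -(fderiv ℝ D2 (x₀, s) (0, 1)) := by
        funext s; have := hH1 x₀ s; linarith
      rw [e, intervalIntegral.integral_neg,
        intervalIntegral.integral_eq_sub_of_hasDerivAt
          (fun s _ => hline2 D2 hD2d x₀ s)
          ((((ContinuousLinearMap.apply ℝ ℝ ((0:ℝ), (1:ℝ))).continuous.comp
            (hD2c.continuous_fderiv one_ne_zero)).comp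
            (by fun_prop : Continuous fun s : ℝ => ((x₀, s) : ℝ × ℝ))).intervalIntegrable 0 t)]
    have h2 : HasDerivAt (fun x => ∫ s in (0:ℝ)..x, D2 (s, 0)) (D2 (x₀, 0)) x₀ :=
      intervalIntegral.integral_hasDerivAt_right (hcontD2b.intervalIntegrable 0 x₀)
        (hcontD2b.stronglyMeasurableAtFilter _ _) hcontD2b.continuousAt
    have h3 : HasDerivAt (fun x => (∫ s in (0:ℝ)..t, D1 (x, s)) - ∫ s in (0:ℝ)..x, D2 (s, 0)) _ x₀ :=
      HasDerivAt.sub h.2 h2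
    rw [hint] at h3
    convert h3 using 1
    ring
  -- joint differentiability of v
  set V : ℝ × ℝ → ℝ := fun q => v q.1 q.2 with hVdef
  have hVd : ∀ p : ℝ × ℝ, HasFDerivAt V
      ((D1 p) • (ContinuousLinearMap.snd ℝ ℝ ℝ) - (D2 p) • (ContinuousLinearMap.fst ℝ ℝ ℝ)) p := by
    intro p
    set L : ℝ × ℝ →L[ℝ] ℝ :=
      (D1 p) • (ContinuousLinearMap.snd ℝ ℝ ℝ) - (D2 p) • (ContinuousLinearMap.fst ℝ ℝ ℝ) with hLdef
    have key : ∀ q : ℝ × ℝ, V q - V p - L (q - p) =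
        (∫ s in p.2..q.2, (D1 (q.1, s) - D1 p)) +
          ∫ s in p.1..q.1, (D2 p - D2 (s, p.2)) := by
      intro q
      have hi2 : IntervalIntegrable (fun s => -D2 (s, p.2)) MeasureTheory.volume p.1 q.1 :=
        ((hD2cont.comp (by fun_prop : Continuous fun s : ℝ => ((s, p.2) : ℝ × ℝ))).neg).intervalIntegrable _ _
      have hA : (∫ s in p.2..q.2, D1 (q.1, s)) = V (q.1, q.2) - V (q.1, p.2) :=
        intervalIntegral.integral_eq_sub_of_hasDerivAt (fun s _ => ht q.1 s)
          ((hcontD1x q.1).intervalIntegrable _ _)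
      have hB : (∫ s in p.1..q.1, -D2 (s, p.2)) = V (q.1, p.2) - V (p.1, p.2) :=
        intervalIntegral.integral_eq_sub_of_hasDerivAt (fun s _ => hx s p.2) hi2
      have e1 : (∫ s in p.2..q.2, (D1 (q.1, s) - D1 p)) =
          (∫ s in p.2..q.2, D1 (q.1, s)) - (q.2 - p.2) * D1 p := by
        rw [intervalIntegral.integral_sub ((hcontD1x q.1).intervalIntegrable _ _)
          intervalIntegrable_const, intervalIntegral.integral_const, smul_eq_mul]
      have e2 : (∫ s in p.1..q.1, (D2 p - D2 (s, p.2))) =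
          (q.1 - p.1) * D2 p + ∫ s in p.1..q.1, -D2 (s, p.2) := by
        have : (fun s => D2 p - D2 (s, p.2)) = fun s => D2 p + -D2 (s, p.2) := by
          funext s; ring
        rw [this, intervalIntegral.integral_add intervalIntegrable_const
          hi2, intervalIntegral.integral_const, smul_eq_mul]
      have hL : L (q - p) = D1 p * (q.2 - p.2) - D2 p * (q.1 - p.1) := by
        simp [hLdef, smul_eq_mul]
      have hVq : V q = V (q.1, q.2) := by rw [Prod.mk.eta]
      have hVp : V p = V (p.1, p.2) := by rw [Prod.mk.eta]
      rw [e1, e2, hA, hB, hL, hVq, hVp]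
      ring
    rw [hasFDerivAt_iff_isLittleO]
    rw [Asymptotics.isLittleO_iff]
    intro c hc
    obtain ⟨δ1, hδ1pos, hδ1⟩ := Metric.continuousAt_iff.mp hD1cont.continuousAt (c/2) (by linarith)
    obtain ⟨δ2, hδ2pos, hδ2⟩ := Metric.continuousAt_iff.mp hD2cont.continuousAt (c/2) (by linarith)
    rw [Metric.eventually_nhds_iff]
    refine ⟨min δ1 δ2, lt_min hδ1pos hδ2pos, fun q hq => ?_⟩
    have hq1 : dist q.1 p.1 ≤ dist q p := le_trans (le_max_left _ _) (le_of_eq Prod.dist_eq.symm)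
    have hq2 : dist q.2 p.2 ≤ dist q p := le_trans (le_max_right _ _) (le_of_eq Prod.dist_eq.symm)
    have hb1 : ∀ s ∈ Set.uIoc p.2 q.2, ‖D1 (q.1, s) - D1 p‖ ≤ c / 2 := by
      intro s hs
      have hd : dist ((q.1, s) : ℝ × ℝ) p < δ1 := by
        rw [Prod.dist_eq]
        have h1 : dist s p.2 ≤ dist q.2 p.2 := by
          rw [Real.dist_eq, Real.dist_eq]; exact abs_sub_le_of_mem_uIoc hs
        exact max_lt (lt_of_le_of_lt hq1 (lt_of_lt_of_le hq (min_le_left _ _)))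
          (lt_of_le_of_lt (le_trans h1 hq2) (lt_of_lt_of_le hq (min_le_left _ _)))
      exact le_of_lt (by simpa [Real.dist_eq] using hδ1 hd)
    have hb2 : ∀ s ∈ Set.uIoc p.1 q.1, ‖D2 p - D2 (s, p.2)‖ ≤ c / 2 := by
      intro s hs
      have hd : dist ((s, p.2) : ℝ × ℝ) p < δ2 := by
        rw [Prod.dist_eq]
        have h1 : dist s p.1 ≤ dist q.1 p.1 := by
          rw [Real.dist_eq, Real.dist_eq]; exact abs_sub_le_of_mem_uIoc hs
        rcases lt_or_ge 0 (dist p.2 p.2) with h | h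
        · simp at h
        · exact max_lt (lt_of_le_of_lt (le_trans h1 hq1) (lt_of_lt_of_le hq (min_le_right _ _)))
            (lt_of_le_of_lt h (lt_min hδ1pos hδ2pos) |>.trans_le (min_le_right _ _))
      have := hδ2 hd
      rw [Real.dist_eq] at this
      rw [norm_sub_rev]
      exact le_of_lt (by simpa [Real.norm_eq_abs, abs_sub_comm] using this)
    have hE1 : ‖∫ s in p.2..q.2, (D1 (q.1, s) - D1 p)‖ ≤ c / 2 * |q.2 - p.2| :=
      intervalIntegral.norm_integral_le_of_norm_le_const hb1
    have hE2 : ‖∫ s in p.1..q.1, (D2 p - D2 (s, p.2))‖ ≤ c / 2 * |q.1 - p.1| :=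
      intervalIntegral.norm_integral_le_of_norm_le_const hb2
    rw [key q]
    calc ‖(∫ s in p.2..q.2, (D1 (q.1, s) - D1 p)) +
          ∫ s in p.1..q.1, (D2 p - D2 (s, p.2))‖
        ≤ c / 2 * |q.2 - p.2| + c / 2 * |q.1 - p.1| :=
          le_trans (norm_add_le _ _) (add_le_add hE1 hE2)
      _ ≤ c / 2 * ‖q - p‖ + c / 2 * ‖q - p‖ := by
          have n1 : |q.1 - p.1| ≤ ‖q - p‖ := by
            rw [← Real.dist_eq, ← dist_eq_norm]; exact hq1
          have n2 : |q.2 - p.2| ≤ ‖q - p‖ := by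
            rw [← Real.dist_eq, ← dist_eq_norm]; exact hq2
          have hc2 : (0:ℝ) ≤ c / 2 := by linarith
          exact add_le_add (mul_le_mul_of_nonneg_left n2 hc2) (mul_le_mul_of_nonneg_left n1 hc2)
      _ = c * ‖q - p‖ := by ring
  -- the function u + i v satisfies the Cauchy-Riemann equations
  have hfd_inner : ∀ z : ℂ, DifferentiableAt ℂ
      (fun w : ℂ => ((u w.re w.im : ℂ) + (v w.re w.im : ℂ) * Complex.I)) z := by
    intro z
    set p : ℝ × ℝ := (z.re, z.im) with hpdef
    have hprod : HasFDerivAt (fun w : ℂ => (w.re, w.im))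
        (Complex.reCLM.prod Complex.imCLM) z :=
      HasFDerivAt.prodMk Complex.reCLM.hasFDerivAt Complex.imCLM.hasFDerivAt
    have hU' : HasFDerivAt (fun w : ℂ => U (w.re, w.im))
        ((fderiv ℝ U p).comp (Complex.reCLM.prod Complex.imCLM)) z :=
      by have := ((hUd p).hasFDerivAt).comp z hprod; exact this
    have hV' : HasFDerivAt (fun w : ℂ => V (w.re, w.im))
        (((D1 p) • (ContinuousLinearMap.snd ℝ ℝ ℝ) -
          (D2 p) • (ContinuousLinearMap.fst ℝ ℝ ℝ)).comp
            (Complex.reCLM.prod Complex.imCLM)) z :=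
      by have := (hVd p).comp z hprod; exact this
    have hre : HasFDerivAt (fun w : ℂ => ((u w.re w.im : ℝ) : ℂ))
        (Complex.ofRealCLM.comp ((fderiv ℝ U p).comp (Complex.reCLM.prod Complex.imCLM))) z :=
      Complex.ofRealCLM.hasFDerivAt.comp z hU'
    have him0 : HasFDerivAt (fun w : ℂ => ((v w.re w.im : ℝ) : ℂ))
        (Complex.ofRealCLM.comp
          ((((D1 p) • (ContinuousLinearMap.snd ℝ ℝ ℝ) -
            (D2 p) • (ContinuousLinearMap.fst ℝ ℝ ℝ)).comp
              (Complex.reCLM.prod Complex.imCLM)))) z :=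
      Complex.ofRealCLM.hasFDerivAt.comp z hV'
    have hg := hre.add (him0.mul_const Complex.I)
    set c : ℂ := (D1 p : ℂ) - (D2 p : ℂ) * Complex.I with hcdef
    refine ⟨_, hasFDerivAt_of_restrictScalars ℝ (f' := c • (1 : ℂ →L[ℂ] ℂ)) hg ?_⟩
    ext w
    have hdecomp := clm_prod_decomp (fderiv ℝ U p) (w.re, w.im)
    simp only [ContinuousLinearMap.coe_restrictScalars', ContinuousLinearMap.smul_apply,
      ContinuousLinearMap.one_apply, ContinuousLinearMap.add_apply,
      ContinuousLinearMap.coe_comp', Function.comp_apply,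
      ContinuousLinearMap.prod_apply, Complex.ofRealCLM_apply, Complex.reCLM_apply,
      Complex.imCLM_apply, ContinuousLinearMap.coe_sub',
      ContinuousLinearMap.coe_smul', Pi.sub_apply, Pi.smul_apply,
      ContinuousLinearMap.coe_fst', ContinuousLinearMap.coe_snd', smul_eq_mul]
    rw [hdecomp]
    simp only [hcdef, smul_eq_mul, Complex.ext_iff, Complex.add_re, Complex.add_im,
      Complex.mul_re, Complex.mul_im, Complex.ofReal_re, Complex.ofReal_im,
      Complex.sub_re, Complex.sub_im, Complex.I_re, Complex.I_im]
    constructor <;> ring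
  -- Liouville
  have hW : Differentiable ℂ fun z : ℂ =>
      Complex.exp ((u z.re z.im : ℂ) + (v z.re z.im : ℂ) * Complex.I) :=
    fun z => (hfd_inner z).cexp
  have hbW : Bornology.IsBounded (Set.range fun z : ℂ =>
      Complex.exp ((u z.re z.im : ℂ) + (v z.re z.im : ℂ) * Complex.I)) := by
    apply Bornology.IsBounded.subset (Metric.isBounded_closedBall (x := (0:ℂ)) (r := Real.exp M))
    rintro _ ⟨z, rfl⟩
    rw [Metric.mem_closedBall, dist_zero_right, Complex.norm_exp]
    have hre : ((u z.re z.im : ℂ) + (v z.re z.im : ℂ) * Complex.I).re = u z.re z.im := by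
      simp
    rw [hre]
    exact Real.exp_le_exp.mpr ((abs_le.mp (hM _ _)).2)
  have hconst := hW.apply_eq_apply_of_bounded hbW
  refine ⟨u 0 0, fun x t => ?_⟩
  have h := hconst ((x : ℂ) + (t : ℂ) * Complex.I) 0
  have h2 := congrArg norm h
  rw [Complex.norm_exp, Complex.norm_exp] at h2
  simp only [Complex.add_re, Complex.add_im, Complex.mul_re, Complex.mul_im,
    Complex.ofReal_re, Complex.ofReal_im, Complex.I_re, Complex.I_im,
    Complex.zero_re, Complex.zero_im, mul_zero, mul_one, zero_mul, sub_zero,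
    add_zero, zero_add, zero_sub, neg_zero] at h2
  exact Real.exp_injective h2
end
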